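/- A nonelementary word hyperbolic group K is icc if and only if FC(K) = 1; moreover FC(K) is a finite characteristic subgroup of K. -/

import Mathlib

def IsICC (G : Type*) [Group G] : Prop :=
  Nontrivial G ∧ ∀ g : G, g ≠ 1 → {h : G | IsConj g h}.Infinite

/-- Word length of x with respect to a generating set S (letters from S ∪ S⁻¹). -/
noncomputable def wordLength {K : Type*} [Group K] (S : Set K) (x : K) : ℕ :=
  sInf {n : ℕ | ∃ l : List K, (∀ a ∈ l, a ∈ S ∨ a⁻¹ ∈ S) ∧ l.length = n ∧ l.prod = x}

/-- Word metric on K with respect to S. -/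
noncomputable def wordDist {K : Type*} [Group K] (S : Set K) (x y : K) : ℕ :=
  wordLength S (x⁻¹ * y)

/-- Gromov product (x|y)_w with respect to the word metric. -/
noncomputable def gromovProd {K : Type*} [Group K] (S : Set K) (w x y : K) : ℝ :=
  ((wordDist S w x : ℝ) + (wordDist S w y : ℝ) - (wordDist S x y : ℝ)) / 2

/-- A group is word hyperbolic if it admits a finite generating set whose word metric
satisfies Gromov's four-point hyperbolicity condition for some δ. -/
def IsWordHyperbolic (K : Type*) [Group K] : Prop :=
  ∃ S : Finset K, Subgroup.closure (S : Set K) = ⊤ ∧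
    ∃ δ : ℝ, ∀ w x y z : K,
      min (gromovProd (S : Set K) w x z) (gromovProd (S : Set K) w z y) - δ ≤
        gromovProd (S : Set K) w x y

/-- A group is elementary if it is virtually cyclic. -/
def IsElementary (K : Type*) [Group K] : Prop :=
  ∃ H : Subgroup K, H.FiniteIndex ∧ IsCyclic H


namespace HypICC

variable {K : Type*} [Group K] {S : Set K}

def Rel (S : Set K) (l : List K) : Prop := ∀ a ∈ l, a ∈ S ∨ a⁻¹ ∈ S

lemma exists_list (hS : Subgroup.closure S = ⊤) (x : K) : ∃ l, Rel S l ∧ l.prod = x := by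
  have hx : x ∈ Subgroup.closure S := by rw [hS]; trivial
  induction hx using Subgroup.closure_induction with
  | mem y hy => exact ⟨[y], fun a ha => by simp at ha; subst ha; exact Or.inl hy, by simp⟩
  | one => exact ⟨[], fun a ha => by simp at ha, by simp⟩
  | mul y z _ _ hy hz =>
      obtain ⟨l1, h1, e1⟩ := hy
      obtain ⟨l2, h2, e2⟩ := hz
      exact ⟨l1 ++ l2, fun a ha => by
        rcases List.mem_append.1 ha with h | h
        · exact h1 a h
        · exact h2 a h, by rw [List.prod_append, e1, e2]⟩
  | inv y _ hy =>
      obtain ⟨l, h1, e1⟩ := hy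
      refine ⟨(l.map (·⁻¹)).reverse, fun a ha => ?_, ?_⟩
      · simp only [List.mem_reverse, List.mem_map] at ha
        obtain ⟨b, hb, rfl⟩ := ha
        rcases h1 b hb with h | h
        · exact Or.inr (by simpa using h)
        · exact Or.inl h
      · rw [← e1, ← List.prod_inv_reverse]

lemma wordLength_exists_list (hS : Subgroup.closure S = ⊤) (x : K) :
    ∃ l : List K, Rel S l ∧ l.length = wordLength S x ∧ l.prod = x := by
  have hne : {n : ℕ | ∃ l : List K, (∀ a ∈ l, a ∈ S ∨ a⁻¹ ∈ S) ∧ l.length = n ∧ l.prod = x}.Nonempty := by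
    obtain ⟨l, h1, h2⟩ := exists_list hS x
    exact ⟨l.length, l, h1, rfl, h2⟩
  exact Nat.sInf_mem hne

lemma wordLength_le (l : List K) (h : Rel S l) : wordLength S l.prod ≤ l.length :=
  Nat.sInf_le ⟨l, h, rfl, rfl⟩

lemma wordLength_one : wordLength S (1 : K) = 0 :=
  Nat.le_zero.1 (wordLength_le ([] : List K) (fun a ha => by simp at ha))

lemma wordLength_mul_le (hS : Subgroup.closure S = ⊤) (x y : K) :
    wordLength S (x * y) ≤ wordLength S x + wordLength S y := by
  obtain ⟨l1, h1, e1, p1⟩ := wordLength_exists_list hS x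
  obtain ⟨l2, h2, e2, p2⟩ := wordLength_exists_list hS y
  have : Rel S (l1 ++ l2) := fun a ha => by
    rcases List.mem_append.1 ha with h | h
    · exact h1 a h
    · exact h2 a h
  calc wordLength S (x * y) = wordLength S (l1 ++ l2).prod := by rw [List.prod_append, p1, p2]
    _ ≤ (l1 ++ l2).length := wordLength_le _ this
    _ = _ := by rw [List.length_append, e1, e2]

lemma wordLength_inv_le (hS : Subgroup.closure S = ⊤) (x : K) :
    wordLength S x⁻¹ ≤ wordLength S x := by
  obtain ⟨l, h1, e1, p1⟩ := wordLength_exists_list hS x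
  have : Rel S ((l.map (·⁻¹)).reverse) := fun a ha => by
    simp only [List.mem_reverse, List.mem_map] at ha
    obtain ⟨b, hb, rfl⟩ := ha
    rcases h1 b hb with h | h
    · exact Or.inr (by simpa using h)
    · exact Or.inl h
  calc wordLength S x⁻¹ = wordLength S ((l.map (·⁻¹)).reverse).prod := by
        rw [← List.prod_inv_reverse, p1]
    _ ≤ _ := wordLength_le _ this
    _ = l.length := by simp
    _ = _ := e1

lemma wordLength_inv (hS : Subgroup.closure S = ⊤) (x : K) :
    wordLength S x⁻¹ = wordLength S x :=
  le_antisymm (wordLength_inv_le hS x) (by simpa using wordLength_inv_le hS x⁻¹)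


lemma ball_finite (hS : Subgroup.closure S = ⊤) (hfin : S.Finite) (R : ℕ) :
    {x : K | wordLength S x ≤ R}.Finite := by
  induction R with
  | zero =>
      refine Set.Finite.subset (Set.finite_singleton 1) (fun x hx => ?_)
      obtain ⟨l, hl, hlen, hprod⟩ := wordLength_exists_list hS x
      have h0 : l.length = 0 := by
        have := Set.mem_setOf_eq ▸ hx
        omega
      rw [List.length_eq_zero_iff] at h0
      simp [Set.mem_singleton_iff, ← hprod, h0]
  | succ R ih =>
      have hcov : {x : K | wordLength S x ≤ R + 1} ⊆
          {x | wordLength S x ≤ R} ∪ ⋃ a ∈ (S ∪ S⁻¹), (a * ·) '' {x | wordLength S x ≤ R} := by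
        intro x hx
        by_cases h : wordLength S x ≤ R
        · exact Or.inl h
        · obtain ⟨l, hl, hlen, hprod⟩ := wordLength_exists_list hS x
          have hx1 : wordLength S x = R + 1 := by
            have := Set.mem_setOf_eq ▸ hx; omega
          rcases l with _ | ⟨a, l'⟩
          · exfalso; simp only [List.length_nil] at hlen; omega
          · refine Or.inr (Set.mem_biUnion (x := a) ?_ ?_)
            · rcases hl a (by simp) with h | h
              · exact Set.mem_union_left _ h
              · exact Set.mem_union_right _ (by simpa [Set.mem_inv] using h)
            · refine ⟨l'.prod, ?_, by rw [← hprod]; simp⟩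
              have : wordLength S l'.prod ≤ l'.length := wordLength_le l' (fun b hb => hl b (by simp [hb]))
              simp only [List.length_cons] at hlen
              simp only [Set.mem_setOf_eq]
              omega
      refine Set.Finite.subset (Set.Finite.union ih ?_) hcov
      exact Set.Finite.biUnion (Set.Finite.union hfin hfin.inv) (fun a _ => ih.image _)

lemma prefix_split (hS : Subgroup.closure S = ⊤) (x : K) (t s : ℕ) (hts : t ≤ s)
    (hs : s ≤ wordLength S x) :
    ∃ p q : K, wordLength S p = t ∧ wordLength S q = s ∧
      wordLength S (p⁻¹ * q) ≤ s - t ∧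
      wordLength S (p⁻¹ * x) = wordLength S x - t ∧
      wordLength S (q⁻¹ * x) = wordLength S x - s := by
  obtain ⟨l, hl, hlen, hprod⟩ := wordLength_exists_list hS x
  set L := wordLength S x with hL
  have hrel : ∀ (l' : List K), l'.Sublist l → Rel S l' := fun l' hsub a ha => hl a (hsub.mem ha)
  have key : ∀ u : ℕ, u ≤ L → wordLength S (l.take u).prod = u ∧
      wordLength S ((l.take u).prod⁻¹ * x) = L - u := by
    intro u hu
    have h1 : wordLength S (l.take u).prod ≤ u := by
      have h := wordLength_le (l.take u) (hrel _ (List.take_sublist _ _))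
      calc wordLength S (l.take u).prod ≤ (l.take u).length := h
        _ = min u l.length := List.length_take
        _ ≤ u := min_le_left _ _
    have hdec : (l.take u).prod⁻¹ * x = (l.drop u).prod := by
      have hl2 : l.prod = (l.take u).prod * (l.drop u).prod := by
        rw [← List.prod_append, List.take_append_drop]
      rw [← hprod, hl2]
      group
    have h2 : wordLength S ((l.take u).prod⁻¹ * x) ≤ L - u := by
      rw [hdec]
      have := wordLength_le (l.drop u) (hrel _ (List.drop_sublist _ _))
      simpa [hlen] using this
    have h3 : L ≤ wordLength S (l.take u).prod + wordLength S ((l.take u).prod⁻¹ * x) := by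
      have := wordLength_mul_le hS (l.take u).prod ((l.take u).prod⁻¹ * x)
      rwa [mul_inv_cancel_left] at this
    omega
  obtain ⟨hp1, hp2⟩ := key t (le_trans hts hs)
  obtain ⟨hq1, hq2⟩ := key s hs
  refine ⟨(l.take t).prod, (l.take s).prod, hp1, hq1, ?_, hp2, hq2⟩
  have hdecomp : l.take s = l.take t ++ (l.drop t).take (s - t) := by
    rw [← List.take_add, Nat.add_sub_cancel' hts]
  have : (l.take t).prod⁻¹ * (l.take s).prod = ((l.drop t).take (s - t)).prod := by
    rw [hdecomp, List.prod_append]; group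
  rw [this]
  have := wordLength_le ((l.drop t).take (s - t))
      (hrel _ (((l.drop t).take_sublist _).trans (List.drop_sublist _ _)))
  exact le_trans this (by simp)

noncomputable def mu (S : Set K) (x : K) : ℕ :=
  sInf {n : ℕ | ∃ w : K, wordLength S (w⁻¹ * x * w) = n}

lemma mu_le (x w : K) : mu S x ≤ wordLength S (w⁻¹ * x * w) :=
  Nat.sInf_le ⟨w, rfl⟩

lemma mu_spec (x : K) : ∃ w : K, wordLength S (w⁻¹ * x * w) = mu S x :=
  Nat.sInf_mem (⟨wordLength S x, 1, by simp⟩ :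
    {n : ℕ | ∃ w : K, wordLength S (w⁻¹ * x * w) = n}.Nonempty)

def FCset (K : Type*) [Group K] : Set K := {g : K | {h : K | IsConj g h}.Finite}

lemma one_mem_FCset : (1:K) ∈ FCset K := by
  have : {h : K | IsConj 1 h} ⊆ {1} := by
    intro h hh
    obtain ⟨c, hc⟩ := isConj_iff.1 hh
    simp only [Set.mem_singleton_iff]
    rw [← hc]
    group
  exact Set.Finite.subset (Set.finite_singleton 1) this

lemma inv_mem_FCset {g : K} (hg : g ∈ FCset K) : g⁻¹ ∈ FCset K := by
  have : {h : K | IsConj g⁻¹ h} ⊆ (·⁻¹) '' {h : K | IsConj g h} := by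
    intro h hh
    obtain ⟨c, hc⟩ := isConj_iff.1 hh
    refine ⟨h⁻¹, ?_, by simp⟩
    refine isConj_iff.2 ⟨c, ?_⟩
    rw [← hc]
    group
  exact Set.Finite.subset (hg.image _) this

lemma mul_mem_FCset {g₁ g₂ : K} (h1 : g₁ ∈ FCset K) (h2 : g₂ ∈ FCset K) :
    g₁ * g₂ ∈ FCset K := by
  have : {h : K | IsConj (g₁ * g₂) h} ⊆
      Set.image2 (· * ·) {h : K | IsConj g₁ h} {h : K | IsConj g₂ h} := by
    intro h hh
    obtain ⟨c, hc⟩ := isConj_iff.1 hh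
    refine ⟨c * g₁ * c⁻¹, isConj_iff.2 ⟨c, rfl⟩, c * g₂ * c⁻¹, isConj_iff.2 ⟨c, rfl⟩, ?_⟩
    rw [← hc]
    group
  exact Set.Finite.subset (Set.Finite.image2 _ h1 h2) this

lemma conj_mem_FCset {g u : K} (hg : g ∈ FCset K) (hc : IsConj g u) : u ∈ FCset K := by
  have : {h : K | IsConj u h} = {h : K | IsConj g h} := by
    ext h
    exact ⟨fun hh => hc.trans hh, fun hh => hc.symm.trans hh⟩
  rw [FCset, Set.mem_setOf_eq, this]
  exact hg

lemma map_mem_FCset (φ : K ≃* K) {g : K} (hg : g ∈ FCset K) : φ g ∈ FCset K := by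
  have : {h : K | IsConj (φ g) h} ⊆ φ '' {h : K | IsConj g h} := by
    intro h hh
    refine ⟨φ.symm h, ?_, by simp⟩
    have := (φ.symm : K →* K).map_isConj hh
    simpa using this
  exact Set.Finite.subset (hg.image _) this


section Hyp
variable (hS : Subgroup.closure S = ⊤) (δ : ℝ)
  (hδ : ∀ w x y z : K, min (gromovProd S w x z) (gromovProd S w z y) - δ ≤ gromovProd S w x y)

lemma gp_eq (w a b : K) :
    gromovProd S w a b = ((wordDist S w a : ℝ) + (wordDist S w b : ℝ) - (wordDist S a b : ℝ)) / 2 :=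
  rfl

lemma wd_eq (a b : K) : wordDist S a b = wordLength S (a⁻¹ * b) := rfl

include hδ in
lemma delta_nonneg : 0 ≤ δ := by
  have h := hδ 1 1 1 1
  have h0 : gromovProd S (1:K) 1 1 = 0 := by
    rw [gp_eq, wd_eq]
    norm_num [wordLength_one]
  rw [h0] at h
  simp at h
  linarith

include hS hδ in
lemma doubling (u : K) (E : ℝ) (hE : 0 ≤ E)
    (hdisp : ∀ w : K, (wordLength S u : ℝ) - 2*E ≤ (wordLength S (w⁻¹ * u * w) : ℝ)) :
    (wordLength S u : ℝ) ≤ 4*δ + 2*E + 6 ∨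
      2*(wordLength S u : ℝ) - (4*δ + 2*E + 4) ≤ (wordLength S (u*u) : ℝ) := by
  by_contra hcon
  push_neg at hcon
  obtain ⟨hL, hsq⟩ := hcon
  have δ0 : 0 ≤ δ := delta_nonneg δ hδ
  set Ln := wordLength S u with hLn
  obtain ⟨t, ht1, ht2⟩ : ∃ t : ℕ, 2*δ + E < (t:ℝ) ∧ (t : ℝ) ≤ 2*δ + E + 2 := by
    refine ⟨⌈2*δ + E⌉₊ + 1, ?_, ?_⟩
    · have := Nat.le_ceil (2*δ + E)
      push_cast
      linarith
    · have := Nat.ceil_lt_add_one (by linarith : (0:ℝ) ≤ 2*δ + E)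
      push_cast
      linarith
  have h2t : 2 * t ≤ Ln := by
    have h4 : ((2 * t : ℕ) : ℝ) < (Ln : ℝ) := by push_cast; linarith
    exact_mod_cast h4.le
  have hα : (t:ℝ) ≤ ((Ln:ℝ) + (Ln:ℝ) - (wordLength S (u*u) : ℝ))/2 := by linarith
  obtain ⟨p, q, hp1, hq1, hpq, hpu, hqu⟩ :=
    prefix_split hS u t (Ln - t) (by omega) (by omega)
  -- distances
  have d_u_one : wordDist S u 1 = Ln := by rw [wd_eq, mul_one, wordLength_inv hS]
  have d_one_u : wordDist S 1 u = Ln := by rw [wd_eq, inv_one, one_mul]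
  have d_u_q : wordDist S u q = t := by
    rw [wd_eq, ← wordLength_inv hS]
    simp only [mul_inv_rev, inv_inv]
    rw [← wd_eq]
    show wordLength S (q⁻¹ * u) = t
    rw [hqu]; omega
  have d_one_q : wordDist S 1 q = Ln - t := by rw [wd_eq, inv_one, one_mul, hq1]
  have d_q_one : wordDist S q 1 = Ln - t := by rw [wd_eq, mul_one, wordLength_inv hS, hq1]
  have d_u_up : wordDist S u (u*p) = t := by
    rw [wd_eq]; simp only [inv_mul_cancel_left]; exact hp1
  have d_uu_up : wordDist S (u*u) (u*p) = Ln - t := by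
    rw [wd_eq]
    have : (u*u)⁻¹ * (u*p) = u⁻¹ * p := by group
    rw [this, ← wordLength_inv hS]
    simp only [mul_inv_rev, inv_inv]
    exact hpu
  have d_u_uu : wordDist S u (u*u) = Ln := by
    rw [wd_eq]; simp only [inv_mul_cancel_left]; rfl
  have d_one_uu : wordDist S 1 (u*u) = wordLength S (u*u) := by
    rw [wd_eq, inv_one, one_mul]
  -- gromov products
  have g1 : gromovProd S u 1 (u*u) = ((Ln:ℝ) + (Ln:ℝ) - (wordLength S (u*u) : ℝ))/2 := by
    rw [gp_eq, d_u_one, d_u_uu, d_one_uu]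
  have g2 : gromovProd S u (u*u) (u*p) = (t:ℝ) := by
    rw [gp_eq, d_u_uu, d_u_up, d_uu_up]
    have : ((Ln - t : ℕ) : ℝ) = (Ln : ℝ) - t := by
      have : t ≤ Ln := by omega
      push_cast [this]; ring
    rw [this]; ring
  have g3 : gromovProd S u q 1 = (t:ℝ) := by
    rw [gp_eq, d_u_q, d_u_one, d_q_one]
    have : ((Ln - t : ℕ) : ℝ) = (Ln : ℝ) - t := by
      have : t ≤ Ln := by omega
      push_cast [this]; ring
    rw [this]; ring
  have A1 : (t:ℝ) - δ ≤ gromovProd S u 1 (u*p) := by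
    have h := hδ u 1 (u*p) (u*u)
    rw [g1, g2] at h
    have : min (((Ln:ℝ) + (Ln:ℝ) - (wordLength S (u*u) : ℝ))/2) (t:ℝ) ≥ (t:ℝ) :=
      le_min hα le_rfl
    linarith [h, this]
  have A2 : (t:ℝ) - 2*δ ≤ gromovProd S u q (u*p) := by
    have h := hδ u q (u*p) 1
    rw [g3] at h
    have : min (t:ℝ) (gromovProd S u 1 (u*p)) ≥ (t:ℝ) - δ := le_min (by linarith) A1
    linarith [h, this]
  have dqB : (wordDist S q (u*p) : ℝ) ≤ 4*δ := by
    have hgp : gromovProd S u q (u*p)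
        = ((wordDist S u q : ℝ) + (wordDist S u (u*p) : ℝ) - (wordDist S q (u*p) : ℝ))/2 := gp_eq ..
    rw [d_u_q, d_u_up] at hgp
    rw [hgp] at A2
    linarith
  -- conclude
  have htri : wordLength S (p⁻¹ * (u * p)) ≤ wordLength S (p⁻¹ * q) + wordDist S q (u*p) := by
    rw [wd_eq]
    have : p⁻¹ * (u * p) = (p⁻¹ * q) * (q⁻¹ * (u*p)) := by group
    rw [this]
    exact wordLength_mul_le hS _ _
  have hdispp := hdisp p
  have heq : p⁻¹ * u * p = p⁻¹ * (u * p) := by group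
  rw [heq] at hdispp
  have hpq' : (wordLength S (p⁻¹ * q) : ℝ) ≤ (Ln:ℝ) - 2*t := by
    have h1 : wordLength S (p⁻¹ * q) ≤ Ln - t - t := hpq
    have h2 : ((Ln - t - t : ℕ) : ℝ) = (Ln:ℝ) - 2*t := by
      rw [Nat.sub_sub, Nat.cast_sub (by omega : t + t ≤ Ln)]
      push_cast
      ring
    calc (wordLength S (p⁻¹ * q) : ℝ) ≤ ((Ln - t - t : ℕ) : ℝ) := by exact_mod_cast h1
      _ = _ := h2
  have hfin : (Ln:ℝ) - 2*E ≤ (Ln:ℝ) - 2*(t:ℝ) + 4*δ := by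
    have hcast : (wordLength S (p⁻¹ * (u*p)) : ℝ)
        ≤ (wordLength S (p⁻¹ * q) : ℝ) + (wordDist S q (u*p) : ℝ) := by exact_mod_cast htri
    linarith
  linarith

lemma wd_one (a : K) : wordDist S 1 a = wordLength S a := by rw [wd_eq, inv_one, one_mul]

include hS hδ in
lemma mu_sq (x : K) :
    (mu S x : ℝ) ≤ 4*δ + 6 ∨ 2*(mu S x : ℝ) - (4*δ + 4) ≤ (mu S (x*x) : ℝ) := by
  obtain ⟨w₀, hw₀⟩ := mu_spec (S := S) (x*x)
  set u := w₀⁻¹ * x * w₀ with hu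
  have huu : u * u = w₀⁻¹ * (x*x) * w₀ := by rw [hu]; group
  have hWuu : wordLength S (u * u) = mu S (x*x) := by rw [huu, hw₀]
  have hconj : ∀ w : K, (mu S x : ℕ) ≤ wordLength S (w⁻¹ * u * w) := by
    intro w
    have : w⁻¹ * u * w = (w₀ * w)⁻¹ * x * (w₀ * w) := by rw [hu]; group
    rw [this]
    exact mu_le x (w₀ * w)
  have hρL : mu S x ≤ wordLength S u := by
    have := hconj 1; simpa using this
  set Ln := wordLength S u with hLn
  set E : ℝ := ((Ln:ℝ) - (mu S x : ℝ))/2 with hE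
  have hE0 : 0 ≤ E := by
    rw [hE]
    have : (mu S x : ℝ) ≤ (Ln : ℝ) := by exact_mod_cast hρL
    linarith
  have hdisp : ∀ w : K, (Ln : ℝ) - 2*E ≤ (wordLength S (w⁻¹ * u * w) : ℝ) := by
    intro w
    have h1 : (mu S x : ℝ) ≤ (wordLength S (w⁻¹ * u * w) : ℝ) := by exact_mod_cast hconj w
    rw [hE]; linarith
  rcases doubling hS δ hδ u E hE0 hdisp with h | h
  · left
    rw [hE] at h
    have : (mu S x : ℝ) ≤ (Ln : ℝ) := by exact_mod_cast hρL
    linarith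
  · right
    rw [hE] at h
    rw [hWuu] at h
    have : (mu S x : ℝ) ≤ (Ln : ℝ) := by exact_mod_cast hρL
    linarith

include hS hδ in
lemma mu_pow_grows (g : K) (hg : 4*δ + 6 < (mu S g : ℝ)) :
    ∀ i : ℕ, (mu S g : ℝ) + i ≤ (mu S (g^(2^i)) : ℝ) := by
  intro i
  induction i with
  | zero => simp
  | succ i ih =>
      have hlarge : 4*δ + 6 < (mu S (g^(2^i)) : ℝ) := by
        have : (0:ℝ) ≤ i := Nat.cast_nonneg i
        linarith
      rcases mu_sq hS δ hδ (g^(2^i)) with h | h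
      · linarith
      · have hpow : g^(2^i) * g^(2^i) = g^(2^(i+1)) := by
          rw [← pow_add]
          congr 1
          ring
        rw [hpow] at h
        push_cast
        linarith

include hS hδ in
lemma torsion_mu_bound (g : K) (hg : IsOfFinOrder g) : (mu S g : ℝ) ≤ 4*δ + 6 := by
  by_contra hcon
  push_neg at hcon
  have hn : 0 < orderOf g := hg.orderOf_pos
  obtain ⟨i, j, hij, hfij⟩ : ∃ i j : ℕ, i ≠ j ∧
      (⟨2^i % orderOf g, Nat.mod_lt _ hn⟩ : Fin (orderOf g))
        = ⟨2^j % orderOf g, Nat.mod_lt _ hn⟩ :=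
    Finite.exists_ne_map_eq_of_infinite _
  wlog hlt : i < j generalizing i j
  · exact this j i hij.symm hfij.symm (by omega)
  have hmod : 2^i ≡ 2^j [MOD orderOf g] := by
    have := Fin.mk.injEq _ _ _ _ ▸ hfij
    simpa [Nat.ModEq] using this
  have heq : g^(2^i) = g^(2^j) := (pow_eq_pow_iff_modEq).2 hmod
  set h := g^(2^i) with hh
  have hmuh : 4*δ + 6 < (mu S h : ℝ) := by
    have := mu_pow_grows hS δ hδ g hcon i
    have h0 : (0:ℝ) ≤ i := Nat.cast_nonneg i
    linarith
  have hpow : h^(2^(j-i)) = h := by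
    rw [hh, ← pow_mul]
    have h2 : 2^i * 2^(j-i) = 2^j := by
      rw [← pow_add]
      congr 1
      omega
    rw [h2]
    exact heq.symm
  have := mu_pow_grows hS δ hδ h hmuh (j - i)
  rw [hpow] at this
  have hji : (1:ℝ) ≤ ((j - i : ℕ) : ℝ) := by
    have : 1 ≤ j - i := by omega
    exact_mod_cast this
  linarith

include hδ in
lemma four_point (w x y z : K) :
    (wordDist S w y : ℝ) + (wordDist S x z : ℝ) ≤
      max ((wordDist S x y : ℝ) + (wordDist S w z : ℝ))
        ((wordDist S x w : ℝ) + (wordDist S z y : ℝ)) + 2*δ := by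
  have h := hδ x w y z
  unfold gromovProd at h
  rcases min_cases (((wordDist S x w : ℝ) + (wordDist S x z : ℝ) - (wordDist S w z : ℝ)) / 2)
      (((wordDist S x z : ℝ) + (wordDist S x y : ℝ) - (wordDist S z y : ℝ)) / 2) with
    ⟨hmin, _⟩ | ⟨hmin, _⟩ <;> rw [hmin] at h
  · exact le_trans (by linarith) (add_le_add_left (le_max_left _ _) _)
  · exact le_trans (by linarith) (add_le_add_left (le_max_right _ _) _)

include hS hδ in
lemma no_infinite_order_in_FC (hfinS : S.Finite) (a : K)
    (hfc : {h : K | IsConj a h}.Finite) (hio : ¬ IsOfFinOrder a) : IsElementary K := by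
  classical
  have δ0 : 0 ≤ δ := delta_nonneg δ hδ
  -- density constant D
  obtain ⟨D, hD⟩ : ∃ D : ℕ, ∀ w : K, ∃ p t : K, w = p * t ∧ p * a = a * p ∧
      wordLength S t ≤ D := by
    set C := hfc.toFinset with hC
    have hrep : ∀ v ∈ C, ∃ u : K, u⁻¹ * a * u = v := by
      intro v hv
      rw [hC, Set.Finite.mem_toFinset] at hv
      obtain ⟨cc, hcc⟩ := isConj_iff.1 hv
      exact ⟨cc⁻¹, by rw [inv_inv]; exact hcc⟩
    choose rep hrepspec using hrep
    refine ⟨C.attach.sup (fun v => wordLength S (rep v.1 v.2)), fun w => ?_⟩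
    have hv : w⁻¹ * a * w ∈ C := by
      rw [hC, Set.Finite.mem_toFinset]
      exact isConj_iff.2 ⟨w⁻¹, by group⟩
    set t := rep _ hv with ht
    refine ⟨w * t⁻¹, t, by group, ?_, ?_⟩
    · have h1 : t⁻¹ * a * t = w⁻¹ * a * w := hrepspec _ hv
      have : (w * t⁻¹) * a * (w * t⁻¹)⁻¹ = a := by
        have := congrArg (fun z => w * z * w⁻¹) h1
        calc (w * t⁻¹) * a * (w * t⁻¹)⁻¹ = w * (t⁻¹ * a * t) * w⁻¹ * (w * t⁻¹ * t * w⁻¹) := by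
              group
          _ = w * (w⁻¹ * a * w) * w⁻¹ * (w * t⁻¹ * t * w⁻¹) := by rw [h1]
          _ = a := by group
      calc (w * t⁻¹) * a = ((w * t⁻¹) * a * (w * t⁻¹)⁻¹) * (w * t⁻¹) := by group
        _ = a * (w * t⁻¹) := by rw [this]
    · exact Finset.le_sup (f := fun v => wordLength S (rep v.1 v.2)) (Finset.mem_attach C ⟨_, hv⟩)
  -- threshold
  set Tn : ℕ := ⌈4*δ⌉₊ + 2*D + 7 with hTn
  have hTnR : 4*δ + 2*(D:ℝ) + 6 < (Tn : ℝ) := by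
    have := Nat.le_ceil (4*δ)
    rw [hTn]
    push_cast
    linarith
  -- choose the power n
  have hzinj : Function.Injective fun m : ℤ => a ^ m :=
    injective_zpow_iff_not_isOfFinOrder.2 hio
  obtain ⟨n, hn1, hnbig⟩ : ∃ n : ℕ, 1 ≤ n ∧ ∀ m : ℤ, m ≠ 0 →
      Tn < wordLength S (a ^ ((n:ℤ) * m)) := by
    have hbad : {m : ℤ | wordLength S (a ^ m) ≤ Tn}.Finite := by
      have := (ball_finite hS hfinS Tn).preimage
        (Set.injOn_of_injective hzinj)
      exact this
    have himg : (Int.natAbs '' {m : ℤ | wordLength S (a ^ m) ≤ Tn}).Finite := hbad.image _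
    obtain ⟨n₀, hn₀⟩ := himg.bddAbove
    refine ⟨n₀ + 1, by omega, fun m hm => ?_⟩
    by_contra hcon
    push_neg at hcon
    have : ((n₀ + 1 : ℕ):ℤ) * m ∈ {m : ℤ | wordLength S (a ^ m) ≤ Tn} := hcon
    have hmem : (((n₀ + 1 : ℕ):ℤ) * m).natAbs ∈
        Int.natAbs '' {m : ℤ | wordLength S (a ^ m) ≤ Tn} := ⟨_, this, rfl⟩
    have hle := hn₀ hmem
    have : (((n₀ + 1 : ℕ):ℤ) * m).natAbs = (n₀ + 1) * m.natAbs := by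
      rw [Int.natAbs_mul, Int.natAbs_natCast]
    rw [this] at hle
    have h1 : 1 ≤ m.natAbs := Int.natAbs_pos.2 hm
    have h2 : n₀ + 1 ≤ (n₀ + 1) * m.natAbs := Nat.le_mul_of_pos_right _ (by omega)
    omega
  -- the element c
  set c : K := a ^ (n:ℤ) with hc
  have hcinj : Function.Injective fun m : ℤ => c ^ m := by
    intro m m' hmm
    simp only [hc, ← zpow_mul] at hmm
    have h2 : (n:ℤ) * m = (n:ℤ) * m' := hzinj hmm
    have hn0 : (n:ℤ) ≠ 0 := by exact_mod_cast (by omega : n ≠ 0)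
    exact mul_left_cancel₀ hn0 h2
  have hkey : ∀ m : ℤ, m ≠ 0 → Tn < wordLength S (c ^ m) := by
    intro m hm
    rw [hc, ← zpow_mul]
    exact hnbig m hm
  have hcomm : ∀ p : K, p * a = a * p → ∀ m : ℤ, p * c ^ m = c ^ m * p := by
    intro p hp m
    have h1 : Commute p a := hp
    exact ((h1.zpow_right ((n:ℤ))).zpow_right m).eq
  have hdisp : ∀ m : ℤ, ∀ w : K,
      (wordLength S (c^m) : ℝ) - 2*(D:ℝ) ≤ (wordLength S (w⁻¹ * c^m * w) : ℝ) := by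
    intro m w
    obtain ⟨p, t, hw, hpa, htD⟩ := hD w
    have h2 : p⁻¹ * c^m * p = c^m := by
      have h := hcomm p hpa m
      calc p⁻¹ * c^m * p = p⁻¹ * (c^m * p) := by group
        _ = p⁻¹ * (p * c^m) := by rw [← h]
        _ = c^m := by group
    have hcm : w⁻¹ * c^m * w = t⁻¹ * c^m * t := by
      rw [hw]
      calc (p*t)⁻¹ * c^m * (p*t) = t⁻¹ * (p⁻¹ * c^m * p) * t := by group
        _ = t⁻¹ * c^m * t := by rw [h2]
    have h3 : wordLength S (c^m) ≤ wordLength S t + wordLength S (t⁻¹ * c^m * t)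
        + wordLength S t := by
      have hdec : c^m = t * (t⁻¹ * c^m * t) * t⁻¹ := by group
      calc wordLength S (c^m) = wordLength S (t * (t⁻¹ * c^m * t) * t⁻¹) := by rw [← hdec]
        _ ≤ wordLength S (t * (t⁻¹ * c^m * t)) + wordLength S t⁻¹ := wordLength_mul_le hS _ _
        _ ≤ wordLength S t + wordLength S (t⁻¹ * c^m * t) + wordLength S t := by
            rw [wordLength_inv hS]
            exact Nat.add_le_add_right (wordLength_mul_le hS _ _) _
    rw [hcm]
    have h4 : (wordLength S (c^m) : ℝ) ≤ (wordLength S t : ℝ)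
        + (wordLength S (t⁻¹ * c^m * t) : ℝ) + (wordLength S t : ℝ) := by exact_mod_cast h3
    have h5 : (wordLength S t : ℝ) ≤ (D : ℝ) := by exact_mod_cast htD
    linarith
  have htaut : ∀ m : ℤ, m ≠ 0 →
      2*(wordLength S (c^m) : ℝ) - (wordLength S (c^(2*m)) : ℝ) ≤ 4*δ + 2*(D:ℝ) + 4 := by
    intro m hm
    rcases doubling hS δ hδ (c^m) (D:ℝ) (Nat.cast_nonneg D) (hdisp m) with h | h
    · exfalso
      have h1 : (Tn:ℝ) < (wordLength S (c^m) : ℝ) := by exact_mod_cast hkey m hm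
      linarith
    · have h2 : c^m * c^m = c^(2*m) := by
        rw [← zpow_add]
        congr 1
        ring
      rw [h2] at h
      linarith
  -- main estimate for commuting elements
  set Rn : ℕ := wordLength S c + 2*D + ⌈8*δ⌉₊ + 4 with hRn
  have hRnR : wordLength S c + 2*(D:ℝ) + 8*δ + 4 ≤ (Rn : ℝ) := by
    have := Nat.le_ceil (8*δ)
    rw [hRn]
    push_cast
    linarith
  have hmain : ∀ x : K, x * a = a * x → ∃ m : ℤ, wordLength S (x⁻¹ * c^m) ≤ Rn := by
    intro x hxa
    set r := wordLength S x with hr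
    have hexk : ∃ j : ℕ, r ≤ wordLength S (c^((j:ℤ)+1)) := by
      by_contra hcon
      push_neg at hcon
      have hfin2 : {m : ℤ | wordLength S (c^m) ≤ r}.Finite :=
        (ball_finite hS hfinS r).preimage (Set.injOn_of_injective hcinj)
      have hsub : Set.range (fun j : ℕ => (j:ℤ)+1) ⊆ {m : ℤ | wordLength S (c^m) ≤ r} := by
        rintro _ ⟨j, rfl⟩
        exact (hcon j).le
      have hinj2 : Function.Injective (fun j : ℕ => (j:ℤ)+1) := by
        intro i j hij
        simpa using hij
      exact (Set.infinite_range_of_injective hinj2) (hfin2.subset hsub)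
    set k := Nat.find hexk with hk
    set kz : ℤ := (k:ℤ) + 1 with hkz
    have hkz0 : kz ≠ 0 := by omega
    set Lk := wordLength S (c^kz) with hLk
    have hk1 : r ≤ Lk := Nat.find_spec hexk
    have hk2 : (Lk:ℝ) ≤ (r:ℝ) + (wordLength S c : ℝ) := by
      rcases Nat.eq_zero_or_pos k with hk0 | hkpos
      · have : kz = 1 := by omega
        rw [hLk, this]
        have : c ^ (1:ℤ) = c := zpow_one c
        rw [this]
        have : (0:ℝ) ≤ (r:ℝ) := Nat.cast_nonneg r
        linarith
      · have hjlt : k - 1 < k := by omega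
        have hjj := Nat.find_min hexk hjlt
        push_neg at hjj
        have hsplit : c ^ kz = c ^ (((k-1:ℕ):ℤ)+1) * c := by
          rw [← zpow_add_one]
          congr 1
          omega
        have hle : Lk ≤ wordLength S (c^(((k-1:ℕ):ℤ)+1)) + wordLength S c := by
          rw [hLk, hsplit]
          exact wordLength_mul_le hS _ _
        have : (Lk:ℝ) ≤ (wordLength S (c^(((k-1:ℕ):ℤ)+1)):ℝ) + (wordLength S c:ℝ) := by
          exact_mod_cast hle
        have h6 : (wordLength S (c^(((k-1:ℕ):ℤ)+1)):ℝ) < (r:ℝ) := by exact_mod_cast hjj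
        linarith
    -- tautness bound
    have halpha : 2*(Lk:ℝ) - (wordLength S (c^(2*kz)) : ℝ) ≤ 4*δ + 2*(D:ℝ) + 4 := htaut kz hkz0
    -- distances
    have dOneNeg : wordDist S 1 (c^(-kz)) = Lk := by
      rw [wd_one, zpow_neg, wordLength_inv hS]
    have dOnePos : wordDist S 1 (c^kz) = Lk := wd_one _
    have dNegPos : wordDist S (c^(-kz)) (c^kz) = wordLength S (c^(2*kz)) := by
      rw [wd_eq, zpow_neg, inv_inv, ← zpow_add]
      congr 2
      ring
    have dNegX : wordDist S (c^(-kz)) x = wordLength S (c^kz * x) := by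
      rw [wd_eq, zpow_neg, inv_inv]
    have dXPos : wordDist S x (c^kz) = wordLength S (x⁻¹ * c^kz) := rfl
    have dOneX : wordDist S 1 x = r := wd_one x
    -- (‡)
    have hdag : (Lk:ℝ) + (r:ℝ) - (4*δ + 2*(D:ℝ) + 4) - 2*δ ≤
        max (wordLength S (c^kz * x) : ℝ) (wordLength S (x⁻¹ * c^kz) : ℝ) := by
      have h := hδ 1 (c^(-kz)) (c^kz) x
      unfold gromovProd at h
      rw [dOneNeg, dOnePos, dNegPos, dNegX, dXPos, dOneX] at h
      rcases min_cases (((Lk:ℝ) + r - (wordLength S (c^kz * x) : ℝ))/2)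
          (((r:ℝ) + Lk - (wordLength S (x⁻¹ * c^kz) : ℝ))/2) with ⟨hmin, _⟩ | ⟨hmin, _⟩ <;>
        rw [hmin] at h
      · have := le_max_left (wordLength S (c^kz * x) : ℝ) (wordLength S (x⁻¹ * c^kz) : ℝ)
        linarith
      · have := le_max_right (wordLength S (c^kz * x) : ℝ) (wordLength S (x⁻¹ * c^kz) : ℝ)
        linarith
    -- (†)
    have hdd : (wordLength S (x * c^kz) : ℝ) + (wordLength S (x⁻¹ * c^kz) : ℝ) ≤
        2*(Lk:ℝ) + 2*δ := by
      have h := four_point δ hδ (S := S) 1 x (x * c^kz) (c^kz)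
      have e1 : wordDist S 1 (x * c^kz) = wordLength S (x * c^kz) := wd_one _
      have e2 : wordDist S x (c^kz) = wordLength S (x⁻¹ * c^kz) := rfl
      have e3 : wordDist S x (x * c^kz) = Lk := by
        rw [wd_eq, inv_mul_cancel_left]
      have e4 : wordDist S 1 (c^kz) = Lk := wd_one _
      have e5 : wordDist S x 1 = r := by rw [wd_eq, mul_one, wordLength_inv hS]
      have e6 : wordDist S (c^kz) (x * c^kz) = r := by
        rw [wd_eq]
        have : (c^kz)⁻¹ * (x * c^kz) = x := by
          rw [hcomm x hxa kz]
          group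
        rw [this]
      rw [e1, e2, e3, e4, e5, e6] at h
      have hrLk : (r:ℝ) ≤ (Lk:ℝ) := by exact_mod_cast hk1
      have : max ((Lk:ℝ) + (Lk:ℝ)) ((r:ℝ) + (r:ℝ)) = (Lk:ℝ) + (Lk:ℝ) := by
        rw [max_eq_left]
        linarith
      rw [this] at h
      linarith
    -- combine
    have hWxc : wordLength S (x * c^kz) = wordLength S (c^kz * x) := by
      rw [hcomm x hxa kz]
    rw [hWxc] at hdd
    have hmin2 : min (wordLength S (c^kz * x) : ℝ) (wordLength S (x⁻¹ * c^kz) : ℝ) ≤ (Rn:ℝ) := by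
      have hsum : (wordLength S (c^kz * x) : ℝ) + (wordLength S (x⁻¹ * c^kz) : ℝ) ≤
          2*(Lk:ℝ) + 2*δ := hdd
      have hLkr : (Lk:ℝ) - (r:ℝ) ≤ (wordLength S c : ℝ) := by linarith
      rcases max_cases (wordLength S (c^kz * x) : ℝ) (wordLength S (x⁻¹ * c^kz) : ℝ) with
        ⟨hmax, hge⟩ | ⟨hmax, hge⟩
      · have : min (wordLength S (c^kz * x) : ℝ) (wordLength S (x⁻¹ * c^kz) : ℝ)
            = (wordLength S (x⁻¹ * c^kz) : ℝ) := min_eq_right (by linarith)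
        rw [this]
        rw [hmax] at hdag
        linarith
      · have : min (wordLength S (c^kz * x) : ℝ) (wordLength S (x⁻¹ * c^kz) : ℝ)
            = (wordLength S (c^kz * x) : ℝ) := min_eq_left (by linarith)
        rw [this]
        rw [hmax] at hdag
        linarith
    rcases min_cases (wordLength S (c^kz * x) : ℝ) (wordLength S (x⁻¹ * c^kz) : ℝ) with
      ⟨hmin, _⟩ | ⟨hmin, _⟩ <;> rw [hmin] at hmin2
    · refine ⟨-kz, ?_⟩
      have : x⁻¹ * c^(-kz) = (c^kz * x)⁻¹ := by
        rw [zpow_neg]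
        group
      rw [this, wordLength_inv hS]
      exact_mod_cast hmin2
    · exact ⟨kz, by exact_mod_cast hmin2⟩
  -- finishing: the subgroup zpowers c has finite index
  refine ⟨Subgroup.zpowers c, ?_, ?_⟩
  · have hcover : ∀ w : K, ∃ z : K, wordLength S z ≤ Rn + D ∧
        (QuotientGroup.mk w : K ⧸ Subgroup.zpowers c) = QuotientGroup.mk z := by
      intro w
      obtain ⟨p, t, hw, hpa, htD⟩ := hD w⁻¹
      obtain ⟨m, hm⟩ := hmain p hpa
      refine ⟨t⁻¹ * (p⁻¹ * c^m), ?_, ?_⟩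
      · calc wordLength S (t⁻¹ * (p⁻¹ * c^m)) ≤ wordLength S t⁻¹ + wordLength S (p⁻¹ * c^m) :=
            wordLength_mul_le hS _ _
          _ ≤ Rn + D := by
            rw [wordLength_inv hS]
            omega
      · rw [QuotientGroup.eq]
        refine Subgroup.mem_zpowers_iff.2 ⟨m, ?_⟩
        have hwinv : w = t⁻¹ * p⁻¹ := by
          rw [← mul_inv_rev, ← hw, inv_inv]
        rw [hwinv]
        group
    haveI : Finite {z : K // wordLength S z ≤ Rn + D} := by
      have := ball_finite hS hfinS (Rn + D)
      exact this.to_subtype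
    haveI hfinq : Finite (K ⧸ Subgroup.zpowers c) := by
      refine Finite.of_surjective
        (fun z : {z : K // wordLength S z ≤ Rn + D} => (QuotientGroup.mk z.1 : K ⧸ Subgroup.zpowers c))
        ?_
      intro q
      obtain ⟨w, rfl⟩ := QuotientGroup.mk_surjective q
      obtain ⟨z, hz1, hz2⟩ := hcover w
      exact ⟨⟨z, hz1⟩, hz2.symm⟩
    exact Subgroup.finiteIndex_of_finite_quotient
  · refine ⟨⟨⟨c, Subgroup.mem_zpowers c⟩, fun x => ?_⟩⟩
    obtain ⟨m, hm⟩ := Subgroup.mem_zpowers_iff.1 x.2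
    refine Subgroup.mem_zpowers_iff.2 ⟨m, ?_⟩
    ext
    push_cast
    exact hm
include hS in
lemma exists_large_mu (hfinS : S.Finite) (hinf : (FCset K).Infinite) (Θ : ℕ) :
    ∃ g ∈ FCset K, Θ < mu S g := by
  by_contra hcon
  push_neg at hcon
  have hcov : FCset K ⊆ ⋃ u ∈ ({u : K | wordLength S u ≤ Θ} ∩ FCset K),
      {h : K | IsConj u h} := by
    intro g hg
    obtain ⟨w, hw⟩ := mu_spec (S := S) g
    set u := w⁻¹ * g * w with hu
    have hconj : IsConj g u := isConj_iff.2 ⟨w⁻¹, by rw [hu]; group⟩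
    refine Set.mem_biUnion ⟨?_, conj_mem_FCset hg hconj⟩ hconj.symm
    show wordLength S u ≤ Θ
    rw [hw]
    exact hcon g hg
  have hfin : (⋃ u ∈ ({u : K | wordLength S u ≤ Θ} ∩ FCset K), {h : K | IsConj u h}).Finite := by
    refine Set.Finite.biUnion ?_ ?_
    · exact Set.Finite.subset (ball_finite hS hfinS Θ) Set.inter_subset_left
    · intro u hu
      exact hu.2
  exact hinf (hfin.subset hcov)

end Hyp
end HypICC

open HypICC in
theorem hyperbolic_icc_iff {K : Type*} [Group K]
    (hhyp : IsWordHyperbolic K) (hne : ¬ IsElementary K) :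
    (IsICC K ↔ {g : K | {h : K | IsConj g h}.Finite} = {1}) ∧
    ∃ F : Subgroup K, (F : Set K) = {g : K | {h : K | IsConj g h}.Finite} ∧
      Finite F ∧ F.Characteristic := by
  obtain ⟨Sf, hSgen, δ, hδ⟩ := hhyp
  set S : Set K := (Sf : Set K) with hSdef
  have hfinS : S.Finite := Sf.finite_toSet
  -- FC(K) is finite
  have hFCfin : (FCset K).Finite := by
    by_contra hinf
    have hinf' : (FCset K).Infinite := hinf
    set Θ : ℕ := ⌈4*δ⌉₊ + 7 with hΘ
    obtain ⟨g, hg, hmu⟩ := exists_large_mu hSgen hfinS hinf' Θ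
    have hfin : IsOfFinOrder g := by
      by_contra hio
      exact hne (no_infinite_order_in_FC hSgen δ hδ hfinS g hg hio)
    have hb := torsion_mu_bound hSgen δ hδ g hfin
    have h1 : 4*δ + 7 ≤ (Θ:ℝ) := by
      have := Nat.le_ceil (4*δ)
      rw [hΘ]
      push_cast
      linarith
    have h2 : (Θ:ℝ) < (mu S g : ℝ) := by exact_mod_cast hmu
    linarith
  -- the subgroup
  let F : Subgroup K :=
    { carrier := FCset K
      one_mem' := one_mem_FCset
      mul_mem' := fun h1 h2 => mul_mem_FCset h1 h2
      inv_mem' := fun h => inv_mem_FCset h }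
  have hchar : F.Characteristic := by
    refine ⟨fun φ => ?_⟩
    ext g
    simp only [Subgroup.mem_comap]
    constructor
    · intro h
      have := map_mem_FCset (φ.symm) h
      exact (by simpa using this : g ∈ FCset K)
    · intro h
      exact map_mem_FCset φ h
  refine ⟨?_, F, rfl, ?_, hchar⟩
  · constructor
    · intro hicc
      ext g
      simp only [Set.mem_setOf_eq, Set.mem_singleton_iff]
      constructor
      · intro hg
        by_contra hg1
        exact (hicc.2 g hg1) hg
      · rintro rfl
        exact one_mem_FCset
    · intro hFC1
      have hnt : Nontrivial K := by
        by_contra hnt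
        rw [not_nontrivial_iff_subsingleton] at hnt
        refine hne ⟨⊤, ⟨by simp [Subgroup.index_top]⟩, ?_⟩
        have : Subsingleton (⊤ : Subgroup K) := by
          infer_instance
        exact isCyclic_of_subsingleton
      refine ⟨hnt, fun g hg => ?_⟩
      intro hfin
      have : g ∈ ({1} : Set K) := by
        rw [← hFC1]
        exact hfin
      exact hg this
  · have : Finite (FCset K) := hFCfin.to_subtype
    exact this
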